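/- arXiv:2301.08981 — 2 statements merged into one kernel-verified Lean document; each statement's English description precedes it below -/
import Mathlib

section
/- Let ℓ, ℓ* ∈ ℕ^r be such that F(ℓ*) = F(ℓ) and every ℓ' ∈ ℕ^r with F(ℓ') = F(ℓ) satisfies ℓ' ≤ ℓ* (i.e., ℓ* is the unique maximal point of the level set of F(ℓ)). Then for every subspace G of V with G ≠ F(ℓ) and every index i: F(ℓ+E_i) = G if and only if F(ℓ*+E_i) = G and ℓ_i = ℓ*_i. -/
/-- `Gbar r ℓ` is the subspace of `r`-tuples of power series whose `i`-th component has
order at least `ℓ i`, for every `i`. -/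
noncomputable def Gbar (r : ℕ) (ℓ : Fin r → ℕ) : Submodule ℂ (Fin r → PowerSeries ℂ) where
  carrier := {f | ∀ i : Fin r, (ℓ i : ℕ∞) ≤ (f i).order}
  zero_mem' := by
    intro i
    simp [PowerSeries.order_zero]
  add_mem' := by
    intro a b ha hb i
    refine le_trans (le_min (ha i) (hb i)) ?_
    simpa using PowerSeries.min_order_le_order_add (a i) (b i)
  smul_mem' := by
    intro c f hf i
    refine PowerSeries.le_order _ _ ?_
    intro n hn
    have hlt : (n : ℕ∞) < ((f : Fin r → PowerSeries ℂ) i).order := lt_of_lt_of_le hn (hf i)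
    have : (PowerSeries.coeff n) ((c • f) i) = c • (PowerSeries.coeff n) (f i) := by
      simp
    rw [this, PowerSeries.coeff_of_lt_order n hlt, smul_zero]

/-- `F O ℓ = O ∩ Ḡ(ℓ)`, the valuation filtration of the subspace `O`. -/
noncomputable def Ffil (r : ℕ) (O : Submodule ℂ (Fin r → PowerSeries ℂ)) (ℓ : Fin r → ℕ) :
    Submodule ℂ (Fin r → PowerSeries ℂ) :=
  O ⊓ Gbar r ℓ

/-- `hfun O ℓ = dim_ℂ O / (O ∩ Ḡ(ℓ))`, the Hilbert function of the filtration. -/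
noncomputable def hfun (r : ℕ) (O : Submodule ℂ (Fin r → PowerSeries ℂ)) (ℓ : Fin r → ℕ) : ℕ :=
  Module.finrank ℂ (O ⧸ (Gbar r ℓ).comap O.subtype)

/-- `hbarfun O ℓ = dim_ℂ V / (Ḡ(ℓ) + O)`. -/
noncomputable def hbarfun (r : ℕ) (O : Submodule ℂ (Fin r → PowerSeries ℂ)) (ℓ : Fin r → ℕ) : ℕ :=
  Module.finrank ℂ ((Fin r → PowerSeries ℂ) ⧸ (Gbar r ℓ ⊔ O))

/-- `eN i` is the `i`-th standard basis vector of `ℕ^r`. -/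
def eN {r : ℕ} (i : Fin r) : Fin r → ℕ := fun j => if j = i then 1 else 0


lemma mem_Gbar {r : ℕ} {ℓ : Fin r → ℕ} {f : Fin r → PowerSeries ℂ} :
    f ∈ Gbar r ℓ ↔ ∀ i : Fin r, (ℓ i : ℕ∞) ≤ (f i).order := Iff.rfl

lemma gbar_antitone {r : ℕ} {ℓ ℓ' : Fin r → ℕ} (h : ℓ ≤ ℓ') : Gbar r ℓ' ≤ Gbar r ℓ := by
  intro f hf
  rw [mem_Gbar] at hf ⊢
  intro i
  exact le_trans (Nat.cast_le.mpr (h i)) (hf i)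

lemma le_add_eN {r : ℕ} (ℓ : Fin r → ℕ) (i : Fin r) : ℓ ≤ ℓ + eN i := by
  intro j
  simp [eN]

/-- if `ℓ*` is the unique maximal point of the level set of `F(ℓ)`, then for
every subspace `G ≠ F(ℓ)` and every index `i`:
`F(ℓ+E_i) = G` if and only if `F(ℓ*+E_i) = G` and `ℓ_i = ℓ*_i`. -/
theorem statement15 (r : ℕ) (hr : 1 ≤ r) (O : Submodule ℂ (Fin r → PowerSeries ℂ))
    (ℓ ℓstar : Fin r → ℕ)
    (hstar : Ffil r O ℓstar = Ffil r O ℓ)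
    (hmax : ∀ ℓ' : Fin r → ℕ, Ffil r O ℓ' = Ffil r O ℓ → ℓ' ≤ ℓstar) :
    ∀ (G : Submodule ℂ (Fin r → PowerSeries ℂ)), G ≠ Ffil r O ℓ →
      ∀ i : Fin r,
        (Ffil r O (ℓ + eN i) = G ↔ (Ffil r O (ℓstar + eN i) = G ∧ ℓ i = ℓstar i)) := by
  have hle : ℓ ≤ ℓstar := hmax ℓ rfl
  intro G hG i
  have keyfun : ℓ i = ℓstar i → Ffil r O (ℓ + eN i) = Ffil r O (ℓstar + eN i) := by
    intro hii
    apply le_antisymm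
    · intro f hf
      have hfO : f ∈ O := hf.1
      have hfG : f ∈ Gbar r (ℓ + eN i) := hf.2
      have hfl : f ∈ Ffil r O ℓstar := by
        rw [hstar]
        exact ⟨hfO, gbar_antitone (le_add_eN ℓ i) hfG⟩
      refine ⟨hfO, mem_Gbar.mpr fun j => ?_⟩
      by_cases hj : j = i
      · have h1 := mem_Gbar.mp hfG j
        have e1 : (ℓ + eN i) j = ℓstar j + 1 := by simp [eN, hj, hii]
        have e2 : (ℓstar + eN i) j = ℓstar j + 1 := by simp [eN, hj]
        rw [e1] at h1
        rw [e2]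
        exact h1
      · have h1 := mem_Gbar.mp hfl.2 j
        have e2 : (ℓstar + eN i) j = ℓstar j := by simp [eN, hj]
        rw [e2]
        exact h1
    · exact inf_le_inf_left _ (gbar_antitone (fun j => Nat.add_le_add (hle j) le_rfl))
  constructor
  · intro hF
    have hii : ℓ i = ℓstar i := by
      by_contra hne
      have hlt : ℓ i < ℓstar i := lt_of_le_of_ne (hle i) hne
      have h1 : ℓ + eN i ≤ ℓstar := by
        intro j
        by_cases hj : j = i
        · subst hj; simpa [eN] using hlt
        · simpa [eN, hj] using hle j
      have h2 : Ffil r O ℓstar ≤ Ffil r O (ℓ + eN i) :=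
        inf_le_inf_left _ (gbar_antitone h1)
      have h3 : Ffil r O (ℓ + eN i) ≤ Ffil r O ℓ :=
        inf_le_inf_left _ (gbar_antitone (le_add_eN ℓ i))
      apply hG
      apply le_antisymm
      · exact hF ▸ h3
      · exact hstar ▸ (hF ▸ h2)
    exact ⟨(keyfun hii) ▸ hF, hii⟩
  · rintro ⟨hF, hii⟩
    rw [keyfun hii]
    exact hF
end

section
/- Let ℓ, ℓ̄ ∈ ℕ^r with ℓ ≤ ℓ̄ and F(ℓ̄) = F(ℓ). Then for every subspace G of V with G ≠ F(ℓ) and every index i: if F(ℓ+E_i) = G then F(ℓ̄+E_i) = G. -/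
lemma mem_Gbar_iff {r : ℕ} {m : Fin r → ℕ} {f : Fin r → PowerSeries ℂ} :
    f ∈ Gbar r m ↔ ∀ i : Fin r, (m i : ℕ∞) ≤ (f i).order := Iff.rfl

lemma Ffil_antitone (r : ℕ) (O : Submodule ℂ (Fin r → PowerSeries ℂ)) {l l' : Fin r → ℕ}
    (h : l ≤ l') : Ffil r O l' ≤ Ffil r O l := by
  intro f hf
  rw [Ffil, Submodule.mem_inf] at hf ⊢
  exact ⟨hf.1, fun i => le_trans (by exact_mod_cast h i) (hf.2 i)⟩

lemma mem_Gbar_succ {r : ℕ} {m : Fin r → ℕ} {f : Fin r → PowerSeries ℂ} (i : Fin r)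
    (hf : f ∈ Gbar r m) :
    f ∈ Gbar r (m + eN i) ↔ PowerSeries.coeff (m i) (f i) = 0 := by
  rw [mem_Gbar_iff]
  constructor
  · intro h
    have hi := h i
    have : ((m + eN i) i : ℕ∞) = (m i : ℕ∞) + 1 := by
      simp [eN]
    rw [this] at hi
    refine PowerSeries.coeff_of_lt_order _ (lt_of_lt_of_le ?_ hi)
    exact_mod_cast (by exact_mod_cast Nat.lt_succ_self (m i) : (m i : ℕ∞) < ((m i + 1 : ℕ) : ℕ∞))
  · intro h j
    by_cases hj : j = i
    · subst hj
      have : ((m + eN j) j : ℕ∞) = ((m j + 1 : ℕ) : ℕ∞) := by simp [eN]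
      rw [this]
      refine PowerSeries.le_order _ _ ?_
      intro n hn
      have hn' : n ≤ m j := by
        have : (n : ℕ) < m j + 1 := by exact_mod_cast hn
        omega
      rcases lt_or_eq_of_le hn' with hlt | heq
      · exact PowerSeries.coeff_of_lt_order _ (lt_of_lt_of_le (by exact_mod_cast hlt) (hf j))
      · rw [heq]; exact h
    · have : ((m + eN i) j : ℕ∞) = (m j : ℕ∞) := by simp [eN, hj]
      rw [this]
      exact hf j

/-- if `ℓ ≤ ℓ̄` and `F(ℓ̄) = F(ℓ)`, then for every subspace `G ≠ F(ℓ)` and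
every index `i`, `F(ℓ+E_i) = G` implies `F(ℓ̄+E_i) = G`. -/
theorem statement16 (r : ℕ) (hr : 1 ≤ r) (O : Submodule ℂ (Fin r → PowerSeries ℂ))
    (ℓ ℓbar : Fin r → ℕ) (hle : ℓ ≤ ℓbar) (heq : Ffil r O ℓbar = Ffil r O ℓ) :
    ∀ (G : Submodule ℂ (Fin r → PowerSeries ℂ)), G ≠ Ffil r O ℓ →
      ∀ i : Fin r, Ffil r O (ℓ + eN i) = G → Ffil r O (ℓbar + eN i) = G := by
  intro G hG i hG'
  have hle' : ℓ + eN i ≤ ℓbar + eN i := fun j => add_le_add (hle j) le_rfl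
  refine le_antisymm ?_ ?_
  · rw [← hG']; exact Ffil_antitone _ _ hle'
  · by_contra hcon
    obtain ⟨x, hxG, hx⟩ := SetLike.not_le_iff_exists.mp hcon
    -- x ∈ G = F(ℓ + E_i) ≤ F(ℓ) = F(ℓbar)
    have hxF : x ∈ Ffil r O ℓbar := by
      rw [heq]
      exact Ffil_antitone r O (fun j => Nat.le_add_right _ _) (hG' ▸ hxG)
    rw [Ffil, Submodule.mem_inf] at hxF
    have hφx : PowerSeries.coeff (ℓbar i) (x i) ≠ 0 := by
      intro h0
      exact hx (Submodule.mem_inf.mpr ⟨hxF.1, (mem_Gbar_succ i hxF.2).mpr h0⟩)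
    -- show F(ℓ) ≤ G, contradicting hG
    apply hG
    refine le_antisymm (hG' ▸ Ffil_antitone r O (fun j => Nat.le_add_right _ _)) ?_
    intro y hy
    have hyF : y ∈ Ffil r O ℓbar := heq ▸ hy
    rw [Ffil, Submodule.mem_inf] at hyF
    set c : ℂ := PowerSeries.coeff (ℓbar i) (y i) / PowerSeries.coeff (ℓbar i) (x i) with hc
    have hzO : y - c • x ∈ O := O.sub_mem hyF.1 (O.smul_mem c hxF.1)
    have hzG : y - c • x ∈ Gbar r ℓbar :=
      (Gbar r ℓbar).sub_mem hyF.2 ((Gbar r ℓbar).smul_mem c hxF.2)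
    have hzcoeff : PowerSeries.coeff (ℓbar i) ((y - c • x) i) = 0 := by
      have : (y - c • x) i = y i - c • x i := rfl
      rw [this, map_sub]
      simp only [PowerSeries.coeff_smul, smul_eq_mul, hc]
      field_simp
      simp
    have hz : y - c • x ∈ Ffil r O (ℓbar + eN i) :=
      Submodule.mem_inf.mpr ⟨hzO, (mem_Gbar_succ i hzG).mpr hzcoeff⟩
    have hzG' : y - c • x ∈ G := by
      rw [← hG']
      exact Ffil_antitone r O hle' hz
    have : y = (y - c • x) + c • x := by ring
    rw [this]
    exact G.add_mem hzG' (G.smul_mem c (hG' ▸ hxG))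
end
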